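/- For the shifted orthonormal Chebyshev polynomials P_j on [0,1] with weight ω(c)=(π√(c(1−c)))^{-1} (so P₀=1 and P_j = √2 T_j(2c−1) for j ≥ 1), the fractional integral satisfies I^α P_j(c) = j√2 Σ_{i=0}^{j} (−1)^{j−i} ((j+i−1)! i!)/((j−i)! Γ(α+i+1) ∏_{k=1}^{2i}(k/2)) c^{i+α} for j ≥ 1, α > 0, c > 0. -/

import Mathlib

noncomputable def tC (j i : ℕ) : ℝ :=
  (-1)^(j-i) * (Nat.factorial (j+i-1)) / ((Nat.factorial (j-i)) * (Nat.factorial (2*i))) * 4^i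

lemma fact_cast_ne (n : ℕ) : ((Nat.factorial n : ℝ)) ≠ 0 := by
  exact_mod_cast (Nat.factorial_pos n).ne'


lemma I1 (a m : ℕ) :
    ((a:ℝ)+m+3) * tC (a+m+3) (a+1) + 2*((a:ℝ)+m+2) * tC (a+m+2) (a+1)
      + ((a:ℝ)+m+1) * tC (a+m+1) (a+1) = 4*((a:ℝ)+m+2) * tC (a+m+2) a := by
  simp only [tC]
  rw [show a+m+3 - (a+1) = m+2 by omega, show a+m+3+(a+1)-1 = 2*a+m+3 by omega,
    show a+m+2 - (a+1) = m+1 by omega, show a+m+2+(a+1)-1 = 2*a+m+2 by omega,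
    show a+m+1 - (a+1) = m by omega, show a+m+1+(a+1)-1 = 2*a+m+1 by omega,
    show a+m+2 - a = m+2 by omega, show a+m+2+a-1 = 2*a+m+1 by omega,
    show 2*(a+1) = 2*a+1+1 by ring, show 2*a+m+3 = 2*a+m+1+1+1 by ring,
    show 2*a+m+2 = 2*a+m+1+1 by ring, show m+2 = m+1+1 by ring]
  simp only [Nat.factorial_succ]
  push_cast
  field_simp
  ring

lemma I0 (n : ℕ) :
    ((n:ℝ)+3) * tC (n+3) 0 + 2*((n:ℝ)+2) * tC (n+2) 0 + ((n:ℝ)+1) * tC (n+1) 0 = 0 := by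
  simp only [tC]
  rw [show n+3-0 = n+3 by omega, show n+3+0-1 = n+2 by omega,
    show n+2-0 = n+2 by omega, show n+2+0-1 = n+1 by omega,
    show n+1-0 = n+1 by omega, show n+1+0-1 = n by omega,
    show n+3 = n+1+1+1 by ring, show n+2 = n+1+1 by ring]
  simp only [Nat.factorial_succ, mul_zero, Nat.factorial_zero]
  push_cast
  field_simp
  ring

lemma I2 (k : ℕ) :
    ((k:ℝ)+2) * tC (k+2) (k+1) + 2*((k:ℝ)+1) * tC (k+1) (k+1) = 4*((k:ℝ)+1) * tC (k+1) k := by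
  simp only [tC]
  rw [show k+2-(k+1) = 1 by omega, show k+2+(k+1)-1 = 2*k+1+1 by omega,
    show k+1-(k+1) = 0 by omega, show k+1+(k+1)-1 = 2*k+1 by omega,
    show k+1-k = 1 by omega, show k+1+k-1 = 2*k by omega,
    show 2*(k+1) = 2*k+1+1 by ring, show 2*k+1 = 2*k+1 by rfl]
  simp only [Nat.factorial_succ, Nat.factorial_zero, Nat.factorial_one,
    show (2*k+1) = 2*k+1 from rfl]
  push_cast
  field_simp
  ring

lemma I3 (k : ℕ) :
    ((k:ℝ)+2) * tC (k+2) (k+2) = 4*((k:ℝ)+1) * tC (k+1) (k+1) := by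
  simp only [tC]
  rw [show k+2-(k+2) = 0 by omega, show k+2+(k+2)-1 = 2*k+3 by omega,
    show k+1-(k+1) = 0 by omega, show k+1+(k+1)-1 = 2*k+1 by omega,
    show 2*(k+2) = 2*k+1+1+1+1 by ring, show 2*(k+1) = 2*k+1+1 by ring,
    show 2*k+3 = 2*k+1+1+1 by ring]
  simp only [Nat.factorial_succ, Nat.factorial_zero]
  push_cast
  field_simp
  ring

lemma sum_step (n : ℕ) (c : ℝ) :
    ((n:ℝ)+3) * ∑ i ∈ Finset.range (n+4), tC (n+3) i * c^i
      = (2*(2*c-1)) * (((n:ℝ)+2) * ∑ i ∈ Finset.range (n+3), tC (n+2) i * c^i)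
        - ((n:ℝ)+1) * ∑ i ∈ Finset.range (n+2), tC (n+1) i * c^i := by
  set L : ℕ → ℝ := fun i => ((n:ℝ)+3) * tC (n+3) i * c^i with hL
  set M : ℕ → ℝ := fun i => ((n:ℝ)+2) * tC (n+2) i * c^i with hM
  set N : ℕ → ℝ := fun i => ((n:ℝ)+1) * tC (n+1) i * c^i with hN
  set H : ℕ → ℝ := fun i => if i = 0 then 0 else 4 * ((n:ℝ)+2) * tC (n+2) (i-1) * c^i with hH
  have sumL : ((n:ℝ)+3) * ∑ i ∈ Finset.range (n+4), tC (n+3) i * c^i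
      = ∑ i ∈ Finset.range (n+4), L i := by
    rw [Finset.mul_sum]; exact Finset.sum_congr rfl fun i _ => by simp only [hL]; ring
  have sumM : ((n:ℝ)+2) * ∑ i ∈ Finset.range (n+3), tC (n+2) i * c^i
      = ∑ i ∈ Finset.range (n+3), M i := by
    rw [Finset.mul_sum]; exact Finset.sum_congr rfl fun i _ => by simp only [hM]; ring
  have sumN : ((n:ℝ)+1) * ∑ i ∈ Finset.range (n+2), tC (n+1) i * c^i
      = ∑ i ∈ Finset.range (n+2), N i := by
    rw [Finset.mul_sum]; exact Finset.sum_congr rfl fun i _ => by simp only [hN]; ring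
  have hHsum : ∑ i ∈ Finset.range (n+4), H i = 4*c*∑ i ∈ Finset.range (n+3), M i := by
    rw [show n+4 = (n+3)+1 from rfl, Finset.sum_range_succ' H (n+3), Finset.mul_sum]
    simp only [hH, hM, if_neg (Nat.succ_ne_zero _), Nat.add_sub_cancel, if_pos rfl, add_zero]
    apply Finset.sum_congr rfl; intro i _
    ring
  have main : ∑ i ∈ Finset.range (n+2), L i
      = ∑ i ∈ Finset.range (n+2), (H i - 2 * M i - N i) := by
    apply Finset.sum_congr rfl
    intro i hi
    simp only [Finset.mem_range] at hi
    match i with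
    | 0 =>
      simp only [hL, hM, hN, hH, if_pos rfl, pow_zero, mul_one]
      linear_combination I0 n
    | (a+1) =>
      have ha : a ≤ n := by omega
      obtain ⟨m, rfl⟩ : ∃ m, n = a + m := ⟨n - a, by omega⟩
      simp only [hL, hM, hN, hH, if_neg (Nat.succ_ne_zero _), Nat.add_sub_cancel]
      rw [show a+m+3 = (a+m)+3 by ring, show a+m+2 = (a+m)+2 by ring,
        show a+m+1 = (a+m)+1 by ring]
      push_cast
      linear_combination (I1 a m) * c^(a+1)
  have hb2 : L (n+2) + 2 * M (n+2) = H (n+2) := by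
    simp only [hL, hM, hH, if_neg (Nat.succ_ne_zero _), Nat.add_sub_cancel]
    have := I2 (n+1)
    push_cast at this ⊢
    rw [show n+1+2 = n+3 by ring, show n+1+1 = n+2 by ring] at this
    linear_combination this * c^(n+2)
  have hb3 : L (n+3) = H (n+3) := by
    simp only [hL, hH, if_neg (Nat.succ_ne_zero _), Nat.add_sub_cancel]
    have := I3 (n+1)
    push_cast at this ⊢
    rw [show n+1+2 = n+3 by ring, show n+1+1 = n+2 by ring] at this
    linear_combination this * c^(n+3)
  have eL : ∑ i ∈ Finset.range (n+4), L i
      = ∑ i ∈ Finset.range (n+2), L i + L (n+2) + L (n+3) := by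
    rw [show n+4 = (n+3)+1 from rfl, Finset.sum_range_succ,
      show n+3 = (n+2)+1 from rfl, Finset.sum_range_succ]
  have eH : ∑ i ∈ Finset.range (n+4), H i
      = ∑ i ∈ Finset.range (n+2), H i + H (n+2) + H (n+3) := by
    rw [show n+4 = (n+3)+1 from rfl, Finset.sum_range_succ,
      show n+3 = (n+2)+1 from rfl, Finset.sum_range_succ]
  have eM : ∑ i ∈ Finset.range (n+3), M i
      = ∑ i ∈ Finset.range (n+2), M i + M (n+2) := by
    rw [show n+3 = (n+2)+1 from rfl, Finset.sum_range_succ]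
  have esub : ∑ i ∈ Finset.range (n+2), (H i - 2 * M i - N i)
      = ∑ i ∈ Finset.range (n+2), H i - 2 * ∑ i ∈ Finset.range (n+2), M i
        - ∑ i ∈ Finset.range (n+2), N i := by
    rw [Finset.sum_sub_distrib, Finset.sum_sub_distrib, Finset.mul_sum]
  have hHsum' := hHsum
  rw [eH, eM] at hHsum'
  rw [sumL, sumM, sumN, eL, main, esub, eM]
  linear_combination hHsum' + hb2 + hb3

lemma cheb_expand : ∀ (j : ℕ), 1 ≤ j → ∀ (c : ℝ),
    (Polynomial.Chebyshev.T ℝ (j:ℤ)).eval (2*c-1)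
      = (j:ℝ) * ∑ i ∈ Finset.range (j+1), tC j i * c^i := by
  intro j
  induction j using Nat.strong_induction_on with
  | _ j ih =>
    match j with
    | 0 => omega
    | 1 =>
      intro _ c
      simp [Polynomial.Chebyshev.T_one, Finset.sum_range_succ, tC, Nat.factorial]
      ring
    | 2 =>
      intro _ c
      norm_num [Polynomial.Chebyshev.T_two, Finset.sum_range_succ, tC, Nat.factorial]
      ring
    | (m+3) =>
      intro _ c
      have hT : Polynomial.Chebyshev.T ℝ (((m+3:ℕ)):ℤ)
          = 2 * Polynomial.X * Polynomial.Chebyshev.T ℝ (((m+2:ℕ)):ℤ)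
            - Polynomial.Chebyshev.T ℝ (((m+1:ℕ)):ℤ) := by
        have := Polynomial.Chebyshev.T_add_two ℝ ((m:ℤ)+1)
        push_cast
        convert this using 2 <;> push_cast <;> ring
      rw [hT]
      simp only [Polynomial.eval_sub, Polynomial.eval_mul, Polynomial.eval_ofNat,
        Polynomial.eval_X]
      rw [ih (m+2) (by omega) (by omega) c, ih (m+1) (by omega) (by omega) c]
      have hs := sum_step m c
      push_cast
      push_cast at hs
      rw [show m+2+1 = m+3 by ring, show m+1+1 = m+2 by ring] at hs ⊢
      rw [show m+3+1 = m+4 by ring]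
      linear_combination -hs

lemma beta_val {α : ℝ} (hα : 0 < α) (i : ℕ) :
    ∫ u in (0:ℝ)..1, (1 - u) ^ (α - 1) * u ^ i
      = Real.Gamma α * (Nat.factorial i) / Real.Gamma (α + i + 1) := by
  have hre : ((∫ u in (0:ℝ)..1, (1 - u) ^ (α - 1) * u ^ i : ℝ) : ℂ)
      = Complex.betaIntegral (i+1) α := by
    rw [← intervalIntegral.integral_ofReal, Complex.betaIntegral]
    apply intervalIntegral.integral_congr
    intro x hx
    simp only [Set.uIcc_of_le (by norm_num : (0:ℝ) ≤ 1), Set.mem_Icc] at hx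
    dsimp only
    rw [show ((i:ℂ)+1-1) = ((i:ℕ):ℂ) by push_cast; ring, Complex.cpow_natCast,
      Complex.ofReal_mul, Complex.ofReal_cpow (by linarith [hx.2] : (0:ℝ) ≤ 1 - x)]
    push_cast
    ring
  have hb : Complex.Gamma (i+1) * Complex.Gamma α
      = Complex.Gamma ((i+1) + α) * Complex.betaIntegral (i+1) α := by
    apply Complex.Gamma_mul_Gamma_eq_betaIntegral
    · simp; positivity
    · simpa using hα
  have hG1 : Complex.Gamma ((i:ℂ)+1) = (Nat.factorial i : ℂ) := by
    simpa using Complex.Gamma_nat_eq_factorial i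
  have hG2 : Complex.Gamma ((i:ℂ)+1+α) = ((Real.Gamma (α + i + 1) : ℝ) : ℂ) := by
    rw [show ((i:ℂ)+1+(α:ℂ)) = ((α + i + 1 : ℝ) : ℂ) by push_cast; ring, Complex.Gamma_ofReal]
  have hG3 : Complex.Gamma (α:ℂ) = ((Real.Gamma α : ℝ) : ℂ) := Complex.Gamma_ofReal α
  have hne : ((Real.Gamma (α + i + 1) : ℝ) : ℂ) ≠ 0 := by
    simpa using (Real.Gamma_pos_of_pos (by positivity : (0:ℝ) < α + i + 1)).ne'
  rw [hG1, hG3, hG2] at hb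
  have : Complex.betaIntegral (i+1) α
      = ((Real.Gamma α * (Nat.factorial i) / Real.Gamma (α + i + 1) : ℝ) : ℂ) := by
    push_cast
    rw [eq_div_iff hne]
    linear_combination -hb
  rw [this] at hre
  exact_mod_cast hre

open intervalIntegral in
lemma integrable_aux {α c : ℝ} (hα : 0 < α) (i : ℕ) :
    IntervalIntegrable (fun x => (c - x) ^ (α - 1) * x ^ i) MeasureTheory.volume 0 c := by
  have h1 : IntervalIntegrable (fun x : ℝ => (c - x) ^ (α - 1)) MeasureTheory.volume 0 c := by
    have := (intervalIntegral.intervalIntegrable_rpow' (a := 0) (b := c) (r := α - 1)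
      (by linarith)).comp_sub_left c
    simpa using this.symm
  exact h1.mul_continuousOn (by fun_prop)


lemma mono_int {α c : ℝ} (hα : 0 < α) (hc : 0 < c) (i : ℕ) :
    ∫ x in (0:ℝ)..c, (c - x) ^ (α - 1) * x ^ i =
      Real.Gamma α * (Nat.factorial i) / Real.Gamma (α + i + 1) * c ^ ((i : ℝ) + α) := by
  have hsub : ∫ x in (0:ℝ)..c, (c - x) ^ (α - 1) * x ^ i
      = c • ∫ u in (0:ℝ)..1, (c - c*u) ^ (α - 1) * (c*u) ^ i := by
    rw [intervalIntegral.smul_integral_comp_mul_left (fun x => (c - x) ^ (α - 1) * x ^ i) c]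
    norm_num
  rw [hsub]
  have hcong : ∫ u in (0:ℝ)..1, (c - c*u) ^ (α - 1) * (c*u) ^ i
      = ∫ u in (0:ℝ)..1, c ^ (α-1) * c ^ i * ((1 - u) ^ (α - 1) * u ^ i) := by
    apply intervalIntegral.integral_congr
    intro u hu
    simp only [Set.uIcc_of_le (by norm_num : (0:ℝ) ≤ 1), Set.mem_Icc] at hu
    dsimp only
    have h1 : c - c*u = c * (1 - u) := by ring
    rw [h1, Real.mul_rpow hc.le (by linarith [hu.2]), mul_pow]
    ring
  rw [hcong, intervalIntegral.integral_const_mul, beta_val hα i]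
  rw [smul_eq_mul]
  rw [show (c:ℝ) ^ ((i:ℝ) + α) = c ^ (i:ℝ) * c ^ α from Real.rpow_add hc _ _,
    show c ^ α = c ^ (α - 1 + 1) by ring_nf, Real.rpow_add hc, Real.rpow_one,
    Real.rpow_natCast]
  ring


lemma prod_half (n : ℕ) : ∏ k ∈ Finset.Icc 1 n, ((k : ℝ) / 2) = (Nat.factorial n) / 2 ^ n := by
  rw [Finset.prod_div_distrib, Finset.prod_const, Nat.card_Icc]
  simp only [Nat.add_sub_cancel]
  congr 1
  rw [← Nat.cast_prod, ← Finset.Ico_add_one_right_eq_Icc, Finset.prod_Ico_id_eq_factorial]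

noncomputable def Ialpha (α : ℝ) (g : ℝ → ℝ) (t : ℝ) : ℝ :=
  (1 / Real.Gamma α) * ∫ x in (0:ℝ)..t, (t - x) ^ (α - 1) * g x

noncomputable def chebP (j : ℕ) (c : ℝ) : ℝ :=
  Real.sqrt 2 * (Polynomial.Chebyshev.T ℝ (j : ℤ)).eval (2 * c - 1)

theorem stmt_17 (α : ℝ) (hα : 0 < α) (j : ℕ) (hj : 1 ≤ j) (c : ℝ) (hc : 0 < c) :
    Ialpha α (chebP j) c =
      (j : ℝ) * Real.sqrt 2 *
        ∑ i ∈ Finset.range (j + 1),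
          (-1 : ℝ) ^ (j - i) *
            (((Nat.factorial (j + i - 1) : ℝ) * (Nat.factorial i : ℝ)) /
              ((Nat.factorial (j - i) : ℝ) * Real.Gamma (α + i + 1) *
                ∏ k ∈ Finset.Icc 1 (2 * i), ((k : ℝ) / 2))) *
            c ^ ((i : ℝ) + α) := by
  have hint : ∫ x in (0:ℝ)..c, (c - x) ^ (α - 1) * chebP j x
      = ∑ i ∈ Finset.range (j + 1),
          (Real.sqrt 2 * (j : ℝ) * tC j i) * ∫ x in (0:ℝ)..c, (c - x) ^ (α - 1) * x ^ i := by
    rw [show (fun x => (c - x) ^ (α - 1) * chebP j x)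
        = fun x => ∑ i ∈ Finset.range (j + 1),
            (Real.sqrt 2 * (j : ℝ) * tC j i) * ((c - x) ^ (α - 1) * x ^ i) from ?_]
    · rw [intervalIntegral.integral_finset_sum]
      · exact Finset.sum_congr rfl fun i _ => intervalIntegral.integral_const_mul _ _
      · exact fun i _ => (integrable_aux hα i).const_mul _
    · funext x
      rw [chebP, cheb_expand j hj x, Finset.mul_sum, Finset.mul_sum, Finset.mul_sum]
      exact Finset.sum_congr rfl fun i _ => by ring
  rw [Ialpha, hint, Finset.mul_sum, Finset.mul_sum]
  apply Finset.sum_congr rfl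
  intro i _
  rw [mono_int hα hc i, tC, prod_half]
  have hG : Real.Gamma α ≠ 0 := (Real.Gamma_pos_of_pos hα).ne'
  have hG2 : Real.Gamma (α + i + 1) ≠ 0 :=
    (Real.Gamma_pos_of_pos (by positivity : (0:ℝ) < α + i + 1)).ne'
  have h1 := fact_cast_ne (j + i - 1)
  have h2 := fact_cast_ne (j - i)
  have h3 := fact_cast_ne (2 * i)
  have h4 := fact_cast_ne i
  field_simp
  rw [show (2:ℝ)^(2*i) = 4^i by rw [pow_mul]; norm_num]
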